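/- Let A₋ₘ, …, Aₙ be a sequence of 2p×2q complex matrices and for -m ≤ k ≤ n let T_k denote the block Toeplitz matrix (A_{k+i-j}) with block rows indexed by the entries A_k,…,A_n down the first column and A_k,…,A_{-m} along the first row (i.e. T_k has block (i,j) equal to A_{k+i-j}, 0 ≤ i ≤ n-k, 0 ≤ j ≤ k+m). Then for each k, dim ker T_{k-1} + dim ker T_{k+1} ≥ 2·dim ker T_k, i.e. the sequence Δ_k = dim ker T_k − dim ker T_{k-1} is nondecreasing in k (where ker denotes the right kernel, with the convention that the kernel space for k = -m-1 is zero). -/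

import Mathlib

noncomputable section Stmt15Aux

namespace Stmt15

variable {p q : ℕ}

/-- The block Toeplitz-type matrix with `R` block rows, `C` block columns and offset `t`. -/
def Mk (A : ℤ → Matrix (Fin (2 * p)) (Fin (2 * q)) ℂ) (R C : ℕ) (t : ℤ) :
    Matrix (Fin R × Fin (2 * p)) (Fin C × Fin (2 * q)) ℂ :=
  Matrix.of fun r c => A (t + (r.1 : ℤ) - (c.1 : ℤ)) r.2 c.2

/-- Dimension of the right kernel. -/
def Nk (A : ℤ → Matrix (Fin (2 * p)) (Fin (2 * q)) ℂ) (R C : ℕ) (t : ℤ) : ℕ :=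
  Module.finrank ℂ (LinearMap.ker (Mk A R C t).mulVecLin)

lemma Nk_congr (A : ℤ → Matrix (Fin (2 * p)) (Fin (2 * q)) ℂ) {R R' C C' : ℕ}
    (hR : R = R') (hC : C = C') (t : ℤ) : Nk A R C t = Nk A R' C' t := by
  subst hR; subst hC; rfl

lemma mem_ker_iff (A : ℤ → Matrix (Fin (2 * p)) (Fin (2 * q)) ℂ) {R C : ℕ} {t : ℤ}
    (x : Fin C × Fin (2 * q) → ℂ) :
    x ∈ LinearMap.ker (Mk A R C t).mulVecLin ↔
      ∀ (r : Fin R) (a : Fin (2 * p)),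
        ∑ j : Fin C, ∑ b : Fin (2 * q), A (t + (r : ℤ) - (j : ℤ)) a b * x (j, b) = 0 := by
  simp [Mk, LinearMap.mem_ker, funext_iff, Prod.forall, Matrix.mulVecLin_apply, Matrix.mulVec,
    dotProduct, Fintype.sum_prod_type]

variable (q) in
/-- Pad with a zero block at the end. -/
def pad0 (C : ℕ) : (Fin C × Fin (2 * q) → ℂ) →ₗ[ℂ] (Fin (C + 1) × Fin (2 * q) → ℂ) where
  toFun x := fun jb => if h : (jb.1 : ℕ) < C then x (⟨jb.1, h⟩, jb.2) else 0
  map_add' x y := by funext jb; by_cases h : (jb.1 : ℕ) < C <;> simp [h]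
  map_smul' r x := by funext jb; by_cases h : (jb.1 : ℕ) < C <;> simp [h]

variable (q) in
/-- Pad with a zero block at the beginning. -/
def pad1 (C : ℕ) : (Fin C × Fin (2 * q) → ℂ) →ₗ[ℂ] (Fin (C + 1) × Fin (2 * q) → ℂ) where
  toFun x := fun jb => if h : 0 < (jb.1 : ℕ) then x (⟨(jb.1 : ℕ) - 1, by omega⟩, jb.2) else 0
  map_add' x y := by funext jb; simp only [Pi.add_apply]; split_ifs <;> simp
  map_smul' r x := by funext jb; simp only [Pi.smul_apply, RingHom.id_apply]; split_ifs <;> simp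

variable (q) in
/-- Drop the first and last blocks. -/
def mid (c : ℕ) : (Fin (c + 2) × Fin (2 * q) → ℂ) →ₗ[ℂ] (Fin c × Fin (2 * q) → ℂ) :=
  LinearMap.funLeft ℂ ℂ fun jb => (⟨(jb.1 : ℕ) + 1, by omega⟩, jb.2)

@[simp] lemma pad0_castSucc {C : ℕ} (x : Fin C × Fin (2 * q) → ℂ) (j : Fin C) (b) :
    pad0 q C x (Fin.castSucc j, b) = x (j, b) := by
  simp [pad0, Fin.is_lt]

@[simp] lemma pad0_last {C : ℕ} (x : Fin C × Fin (2 * q) → ℂ) (b) :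
    pad0 q C x (Fin.last C, b) = 0 := by
  simp [pad0]

@[simp] lemma pad1_succ {C : ℕ} (x : Fin C × Fin (2 * q) → ℂ) (j : Fin C) (b) :
    pad1 q C x (Fin.succ j, b) = x (j, b) := by
  simp [pad1]

@[simp] lemma pad1_zero {C : ℕ} (x : Fin C × Fin (2 * q) → ℂ) (b) :
    pad1 q C x ((0 : Fin (C + 1)), b) = 0 := by
  simp [pad1]

@[simp] lemma mid_apply {c : ℕ} (y : Fin (c + 2) × Fin (2 * q) → ℂ) (j : Fin c) (b) :
    mid q c y (j, b) = y (⟨(j : ℕ) + 1, by omega⟩, b) := rfl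

lemma pad0_injective {C : ℕ} : Function.Injective (pad0 q C) := by
  intro x y h
  funext jb
  obtain ⟨j, b⟩ := jb
  have := congrFun h (Fin.castSucc j, b)
  simpa using this

lemma pad1_injective {C : ℕ} : Function.Injective (pad1 q C) := by
  intro x y h
  funext jb
  obtain ⟨j, b⟩ := jb
  have := congrFun h (Fin.succ j, b)
  simpa using this

lemma mul_arg_congr (A : ℤ → Matrix (Fin (2 * p)) (Fin (2 * q)) ℂ)
    (a : Fin (2 * p)) (b : Fin (2 * q)) (z : ℂ) {u v : ℤ} (h : u = v) :
    A u a b * z = A v a b * z := by rw [h]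

lemma key (A : ℤ → Matrix (Fin (2 * p)) (Fin (2 * q)) ℂ) (R c : ℕ) (t : ℤ) :
    2 * Nk A (R + 1) (c + 1) t ≤ Nk A (R + 2) c (t - 1) + Nk A R (c + 2) (t + 1) := by
  classical
  let K := LinearMap.ker (Mk A (R + 1) (c + 1) t).mulVecLin
  let K' := LinearMap.ker (Mk A R (c + 2) (t + 1)).mulVecLin
  let K'' := LinearMap.ker (Mk A (R + 2) c (t - 1)).mulVecLin
  let U := K.map (pad0 q (c + 1))
  let V := K.map (pad1 q (c + 1))
  have hUK' : U ≤ K' := by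
    rintro y ⟨x, hx, rfl⟩
    replace hx := (mem_ker_iff A x).mp hx
    show _ ∈ LinearMap.ker (Mk A R (c + 2) (t + 1)).mulVecLin
    rw [mem_ker_iff]
    intro r a
    rw [Fin.sum_univ_castSucc]
    simp only [pad0_last, mul_zero, Finset.sum_const_zero, add_zero]
    rw [← hx r.succ a]
    refine Finset.sum_congr rfl fun j _ => Finset.sum_congr rfl fun b _ => ?_
    rw [pad0_castSucc]
    refine mul_arg_congr A a b _ ?_
    simp only [Fin.coe_castSucc, Fin.val_succ]
    push_cast
    ring
  have hVK' : V ≤ K' := by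
    rintro y ⟨x, hx, rfl⟩
    replace hx := (mem_ker_iff A x).mp hx
    show _ ∈ LinearMap.ker (Mk A R (c + 2) (t + 1)).mulVecLin
    rw [mem_ker_iff]
    intro r a
    rw [Fin.sum_univ_succ]
    simp only [pad1_zero, mul_zero, Finset.sum_const_zero, zero_add]
    rw [← hx r.castSucc a]
    refine Finset.sum_congr rfl fun j _ => Finset.sum_congr rfl fun b _ => ?_
    rw [pad1_succ]
    refine mul_arg_congr A a b _ ?_
    simp only [Fin.coe_castSucc, Fin.val_succ]
    push_cast
    ring
  -- the intersection maps into K'' via `mid`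
  have hmid' : ∀ y ∈ U ⊓ V, mid q c y ∈ K'' := by
    rintro y ⟨⟨x, hx, hxy⟩, ⟨x', hx', hx'y⟩⟩
    replace hx := (mem_ker_iff A x).mp hx
    replace hx' := (mem_ker_iff A x').mp hx'
    have hy0 : ∀ b, y ((0 : Fin (c + 2)), b) = 0 := by
      intro b; rw [← hx'y]; exact pad1_zero x' b
    have hylast : ∀ b, y (Fin.last (c + 1), b) = 0 := by
      intro b; rw [← hxy]; exact pad0_last x b
    have hmidx : ∀ (j : Fin c) (b), mid q c y (j, b) = x (j.succ, b) := by
      intro j b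
      rw [mid_apply, ← hxy]
      have he : (⟨(j : ℕ) + 1, by omega⟩ : Fin (c + 2)) = Fin.castSucc j.succ := by
        ext; simp
      rw [he, pad0_castSucc]
    have hmidx' : ∀ (j : Fin c) (b), mid q c y (j, b) = x' (j.castSucc, b) := by
      intro j b
      rw [mid_apply, ← hx'y]
      have he : (⟨(j : ℕ) + 1, by omega⟩ : Fin (c + 2)) = Fin.succ j.castSucc := by
        ext; simp
      rw [he, pad1_succ]
    have hx0 : ∀ b, x ((0 : Fin (c + 1)), b) = 0 := by
      intro b
      have h := pad0_castSucc x (0 : Fin (c + 1)) b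
      rw [hxy, Fin.castSucc_zero] at h
      rw [← h, hy0]
    have hx'last : ∀ b, x' (Fin.last c, b) = 0 := by
      intro b
      have h := pad1_succ x' (Fin.last c) b
      rw [hx'y, Fin.succ_last] at h
      rw [← h, hylast]
    show _ ∈ LinearMap.ker (Mk A (R + 2) c (t - 1)).mulVecLin
    rw [mem_ker_iff]
    intro r a
    induction r using Fin.cases with
    | zero =>
        have h0 := hx 0 a
        rw [Fin.sum_univ_succ] at h0
        simp only [hx0, mul_zero, Finset.sum_const_zero, zero_add] at h0
        rw [← h0]
        refine Finset.sum_congr rfl fun j _ => Finset.sum_congr rfl fun b _ => ?_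
        rw [hmidx j b]
        refine mul_arg_congr A a b _ ?_
        simp only [Fin.val_succ, Fin.val_zero]
        push_cast
        ring
    | succ s =>
        have hs := hx' s a
        rw [Fin.sum_univ_castSucc] at hs
        simp only [hx'last, mul_zero, Finset.sum_const_zero, add_zero] at hs
        rw [← hs]
        refine Finset.sum_congr rfl fun j _ => Finset.sum_congr rfl fun b _ => ?_
        rw [hmidx' j b]
        refine mul_arg_congr A a b _ ?_
        simp only [Fin.coe_castSucc, Fin.val_succ, Fin.val_last]
        push_cast
        ring
  -- injectivity of `mid` on the intersection
  have hmidinj : ∀ y ∈ U ⊓ V, mid q c y = 0 → y = 0 := by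
    rintro y ⟨⟨x, hx, hxy⟩, ⟨x', hx', hx'y⟩⟩ hmy
    funext jb
    obtain ⟨j, b⟩ := jb
    induction j using Fin.cases with
    | zero =>
        rw [← hx'y]; exact pad1_zero x' b
    | succ j' =>
        induction j' using Fin.lastCases with
        | last =>
            rw [Fin.succ_last, ← hxy]
            exact pad0_last x b
        | cast i =>
            have he : Fin.succ (Fin.castSucc i) = (⟨(i : ℕ) + 1, by omega⟩ : Fin (c + 2)) := by
              ext; simp
            rw [he]
            have h := congrFun hmy (i, b)
            rw [mid_apply] at h
            exact h
  -- dimension counting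
  have e0 : Module.finrank ℂ K = Module.finrank ℂ U :=
    (Submodule.equivMapOfInjective _ pad0_injective K).finrank_eq
  have e1 : Module.finrank ℂ K = Module.finrank ℂ V :=
    (Submodule.equivMapOfInjective _ pad1_injective K).finrank_eq
  have hsum := Submodule.finrank_sup_add_finrank_inf_eq U V
  have hsup : Module.finrank ℂ ↥(U ⊔ V) ≤ Module.finrank ℂ K' :=
    Submodule.finrank_mono (sup_le hUK' hVK')
  have hinf : Module.finrank ℂ ↥(U ⊓ V) ≤ Module.finrank ℂ K'' := by
    let f : ↥(U ⊓ V) →ₗ[ℂ] ↥K'' :=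
      LinearMap.codRestrict K'' ((mid q c).comp (U ⊓ V).subtype)
        (fun y => hmid' y.1 y.2)
    have hfinj : Function.Injective f := by
      rw [injective_iff_map_eq_zero]
      intro y hy
      have hmy : mid q c (y : Fin (c + 2) × Fin (2 * q) → ℂ) = 0 := congrArg Subtype.val hy
      exact Subtype.ext (hmidinj y.1 y.2 hmy)
    exact LinearMap.finrank_le_finrank_of_injective hfinj
  show 2 * Module.finrank ℂ K ≤ Module.finrank ℂ K'' + Module.finrank ℂ K'
  omega

end Stmt15

end Stmt15Aux

theorem stmt_15 (p q : ℕ) (m n : ℤ)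
    (A : ℤ → Matrix (Fin (2 * p)) (Fin (2 * q)) ℂ)
    (Tker : ℤ → ℕ)
    (hTker : ∀ j : ℤ, Tker j =
      Module.finrank ℂ (LinearMap.ker (Matrix.mulVecLin (Matrix.of
        fun (r : Fin ((n - j).toNat + 1) × Fin (2 * p))
            (c : Fin ((j + m).toNat + 1) × Fin (2 * q)) =>
          A (j + (r.1 : ℤ) - (c.1 : ℤ)) r.2 c.2)))) :
    (∀ k : ℤ, -m ≤ k - 1 → k + 1 ≤ n →
        2 * Tker k ≤ Tker (k - 1) + Tker (k + 1)) ∧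
      (-m + 1 ≤ n → 2 * Tker (-m) ≤ 0 + Tker (-m + 1)) := by
  constructor
  · intro k h1 h2
    have key' := Stmt15.key A ((n - k - 1).toNat + 1) ((k - 1 + m).toNat + 1) k
    have ek : Tker k = Stmt15.Nk A ((n - k - 1).toNat + 1 + 1) ((k - 1 + m).toNat + 1 + 1) k := by
      rw [hTker k]
      exact Stmt15.Nk_congr A (by omega) (by omega) k
    have ek1 : Tker (k - 1) =
        Stmt15.Nk A ((n - k - 1).toNat + 1 + 2) ((k - 1 + m).toNat + 1) (k - 1) := by
      rw [hTker (k - 1)]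
      exact Stmt15.Nk_congr A (by omega) (by omega) (k - 1)
    have ek2 : Tker (k + 1) =
        Stmt15.Nk A ((n - k - 1).toNat + 1) ((k - 1 + m).toNat + 1 + 2) (k + 1) := by
      rw [hTker (k + 1)]
      exact Stmt15.Nk_congr A (by omega) (by omega) (k + 1)
    rw [ek, ek1, ek2]
    exact key'
  · intro h
    have key' := Stmt15.key A ((n + m - 1).toNat + 1) 0 (-m)
    have hzero : Stmt15.Nk A ((n + m - 1).toNat + 1 + 2) 0 (-m - 1) = 0 := by
      have : Subsingleton (Fin 0 × Fin (2 * q) → ℂ) := by infer_instance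
      exact Module.finrank_zero_of_subsingleton
    have ek : Tker (-m) = Stmt15.Nk A ((n + m - 1).toNat + 1 + 1) (0 + 1) (-m) := by
      rw [hTker (-m)]
      exact Stmt15.Nk_congr A (by omega) (by omega) (-m)
    have ek2 : Tker (-m + 1) = Stmt15.Nk A ((n + m - 1).toNat + 1) (0 + 2) (-m + 1) := by
      rw [hTker (-m + 1)]
      exact Stmt15.Nk_congr A (by omega) (by omega) (-m + 1)
    rw [ek, ek2]
    omega
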